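/- Let κ be an uncountable cardinal and W a κ-complete ultrafilter on κ. Suppose g : κ → κ satisfies: (i) g is not constant on any set in W; and (ii) every function f : κ → κ with {α < κ : f(α) < g(α)} ∈ W is constant on some set in W. Then the pushforward ultrafilter g_*(W) = {X ⊆ κ : g⁻¹(X) ∈ W} is a κ-complete nonprincipal ultrafilter on κ that is normal, i.e., every regressive function h : κ → κ is constant on some set in g_*(W). -/

import Mathlib

open Cardinal

/-- Let `W` be a `κ`-complete ultrafilter on an uncountable cardinal
`κ` (identified with the type `κ.ord.ToType` of ordinals below `κ`) and `g : κ → κ` be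
(i) non-constant on every set in `W`, and (ii) such that every `f` with
`{α : f α < g α} ∈ W` is constant on a set in `W`. Then the pushforward `g_*(W)` is a
`κ`-complete nonprincipal normal ultrafilter on `κ` (every regressive function is
constant on a set in it). -/
theorem stmt_9 (κ : Cardinal) (hκ : ℵ₀ < κ)
    (W : Ultrafilter κ.ord.ToType)
    (hcomp : ∀ {ι : Type} (s : ι → Set κ.ord.ToType), #ι < κ →
      (∀ i, s i ∈ W) → (⋂ i, s i) ∈ W)
    (g : κ.ord.ToType → κ.ord.ToType)
    (h1 : ∀ X ∈ W, ¬ ∃ c, ∀ x ∈ X, g x = c)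
    (h2 : ∀ f : κ.ord.ToType → κ.ord.ToType, {a | f a < g a} ∈ W →
      ∃ X ∈ W, ∃ c, ∀ x ∈ X, f x = c) :
    (∀ {ι : Type} (s : ι → Set κ.ord.ToType), #ι < κ →
      (∀ i, s i ∈ Ultrafilter.map g W) → (⋂ i, s i) ∈ Ultrafilter.map g W) ∧
    (∀ x : κ.ord.ToType, ({x} : Set κ.ord.ToType) ∉ Ultrafilter.map g W) ∧
    (∀ h : κ.ord.ToType → κ.ord.ToType,
      (∀ α : κ.ord.ToType, (∃ β, β < α) → h α < α) →
      ∃ X ∈ Ultrafilter.map g W, ∃ c, ∀ β ∈ X, h β = c) := by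
  have hmapmem : ∀ (S : Set κ.ord.ToType), S ∈ Ultrafilter.map g W ↔ g ⁻¹' S ∈ W := by
    intro S; rfl
  refine ⟨?_, ?_, ?_⟩
  · intro ι s hs hmem
    have : (⋂ i, g ⁻¹' s i) ∈ W := hcomp _ hs (fun i => (hmapmem _).1 (hmem i))
    rw [hmapmem, Set.preimage_iInter]
    exact this
  · intro x hx
    exact h1 _ ((hmapmem _).1 hx) ⟨x, fun y hy => hy⟩
  · intro h hreg
    have hne : Nonempty κ.ord.ToType := by
      rw [Ordinal.toType_nonempty_iff_ne_zero, ne_eq, Cardinal.ord_eq_zero]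
      exact fun h0 => by simp [h0] at hκ
    obtain ⟨m, -, hm⟩ := (IsWellFounded.wf (α := κ.ord.ToType) (r := (· < ·))).has_min
      Set.univ ⟨Classical.arbitrary _, trivial⟩
    have hA : {a | g a ≠ m} ∈ W := by
      by_contra hA
      rw [← Ultrafilter.compl_mem_iff_notMem] at hA
      exact h1 _ hA ⟨m, fun x hx => not_not.1 hx⟩
    have hlt : {a | h (g a) < g a} ∈ W := by
      refine W.toFilter.sets_of_superset hA fun a ha => ?_
      have : m < g a := lt_of_le_of_ne (not_lt.1 (hm (g a) trivial)) (Ne.symm ha)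
      exact hreg _ ⟨m, this⟩
    obtain ⟨X, hX, c, hc⟩ := h2 (fun a => h (g a)) hlt
    refine ⟨g '' X, ?_, c, ?_⟩
    · exact W.toFilter.sets_of_superset hX (Set.subset_preimage_image g X)
    · rintro β ⟨x, hx, rfl⟩
      exact hc x hx
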